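/- Monotonicity of DQAEM: with 𝒢(θ) = (1/β)·ln Tr[e^{−β(H(θ)+H^{nc})}] and 𝒰(θ;θ') = Tr[ρ(θ')·ln e^{−β(H(θ)+H^{nc})}] where ρ(θ') = e^{−β(H(θ')+H^{nc})}/Tr[e^{−β(H(θ')+H^{nc})}], if 𝒰(θ_{t+1};θ_t) ≥ 𝒰(θ_t;θ_t) then 𝒢(θ_{t+1}) ≥ 𝒢(θ_t). -/

import Mathlib

open Matrix

namespace DQAEMAux

variable {K : ℕ}

lemma exp_hermitian_eq {X : Matrix (Fin K) (Fin K) ℂ} (hX : X.IsHermitian) :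
    NormedSpace.exp X =
      (hX.eigenvectorUnitary : Matrix (Fin K) (Fin K) ℂ) *
        diagonal (fun i => (Real.exp (hX.eigenvalues i) : ℂ)) *
        star (hX.eigenvectorUnitary : Matrix (Fin K) (Fin K) ℂ) := by
  set U : Matrix (Fin K) (Fin K) ℂ := (hX.eigenvectorUnitary : Matrix (Fin K) (Fin K) ℂ) with hU
  have hsU : star U * U = 1 := Matrix.mem_unitaryGroup_iff'.mp hX.eigenvectorUnitary.2
  have hUs : U * star U = 1 := Matrix.mem_unitaryGroup_iff.mp hX.eigenvectorUnitary.2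
  have hinv : U⁻¹ = star U := Matrix.inv_eq_left_inv hsU
  have hUnit : IsUnit U := by
    apply Matrix.isUnit_iff_isUnit_det U |>.mpr
    have := congrArg Matrix.det hUs
    rw [Matrix.det_mul, Matrix.det_one] at this
    exact IsUnit.of_mul_eq_one _ this
  calc NormedSpace.exp X
      = NormedSpace.exp (U * diagonal (RCLike.ofReal ∘ hX.eigenvalues) * U⁻¹) := by
        rw [hinv]; congr 1; exact hX.spectral_theorem
    _ = U * NormedSpace.exp (diagonal (RCLike.ofReal ∘ hX.eigenvalues)) * U⁻¹ :=
        Matrix.exp_conj U _ hUnit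
    _ = U * diagonal (fun i => (Real.exp (hX.eigenvalues i) : ℂ)) * star U := by
        rw [hinv, Matrix.exp_diagonal, Pi.exp_def]
        congr 2
        funext i
        simp only [Function.comp_apply, RCLike.ofReal_alg]
        rw [← Complex.exp_eq_exp_ℂ]
        simp [Complex.ofReal_exp, Complex.exp_ofReal_re]

/-- trace of exp of a Hermitian matrix -/
lemma trace_exp_hermitian {X : Matrix (Fin K) (Fin K) ℂ} (hX : X.IsHermitian) :
    Matrix.trace (NormedSpace.exp X) = ((∑ i, Real.exp (hX.eigenvalues i) : ℝ) : ℂ) := by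
  set U : Matrix (Fin K) (Fin K) ℂ := (hX.eigenvectorUnitary : Matrix (Fin K) (Fin K) ℂ) with hU
  have hsU : star U * U = 1 := Matrix.mem_unitaryGroup_iff'.mp hX.eigenvectorUnitary.2
  rw [exp_hermitian_eq hX, Matrix.trace_mul_cycle, ← hU, hsU, one_mul,
    Matrix.trace_diagonal]
  push_cast
  rfl

/-- trace (exp X * Y) in the eigenbasis of X -/
lemma trace_exp_mul {X Y : Matrix (Fin K) (Fin K) ℂ} (hX : X.IsHermitian) :
    Matrix.trace (NormedSpace.exp X * Y) =
      ∑ i, (Real.exp (hX.eigenvalues i) : ℂ) *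
        ((star (hX.eigenvectorUnitary : Matrix (Fin K) (Fin K) ℂ) * Y *
          (hX.eigenvectorUnitary : Matrix (Fin K) (Fin K) ℂ)) i i) := by
  set U : Matrix (Fin K) (Fin K) ℂ := (hX.eigenvectorUnitary : Matrix (Fin K) (Fin K) ℂ) with hU
  rw [exp_hermitian_eq hX, ← hU]
  have : U * diagonal (fun i => (Real.exp (hX.eigenvalues i) : ℂ)) * star U * Y
      = U * diagonal (fun i => (Real.exp (hX.eigenvalues i) : ℂ)) * (star U * Y) :=
    mul_assoc _ _ _
  rw [this, Matrix.trace_mul_comm, ← mul_assoc]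
  simp [Matrix.trace, Matrix.diag, Matrix.mul_diagonal, mul_comm]


lemma peierls {M : Matrix (Fin K) (Fin K) ℂ} (hM : M.IsHermitian) (i : Fin K) :
    Real.exp ((M i i).re) ≤ ((NormedSpace.exp M) i i).re := by
  classical
  set V : Matrix (Fin K) (Fin K) ℂ := (hM.eigenvectorUnitary : Matrix (Fin K) (Fin K) ℂ) with hV
  set μ : Fin K → ℝ := hM.eigenvalues with hμ
  set w : Fin K → ℝ := fun k => Complex.normSq (V i k) with hw
  have hVs : V * star V = 1 := Matrix.mem_unitaryGroup_iff.mp hM.eigenvectorUnitary.2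
  have hterm : ∀ (c : ℝ) (k : Fin K), V i k * (c : ℂ) * star (V i k) = ((c * w k : ℝ) : ℂ) := by
    intro c k
    rw [mul_comm (V i k) (c : ℂ), mul_assoc,
      show star (V i k) = starRingEnd ℂ (V i k) from rfl, Complex.mul_conj]
    push_cast
    ring
  have hentry : ∀ (d : Fin K → ℝ),
      ((V * diagonal (fun k => (d k : ℂ)) * star V) i i) = ((∑ k, d k * w k : ℝ) : ℂ) := by
    intro d
    rw [Matrix.mul_apply]
    have h1 : ∀ k : Fin K, (V * diagonal (fun k => (d k : ℂ))) i k * (star V) k i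
        = ((d k * w k : ℝ) : ℂ) := by
      intro k
      rw [Matrix.mul_diagonal, Matrix.star_apply]
      exact hterm (d k) k
    rw [Finset.sum_congr rfl (fun k _ => h1 k)]
    norm_cast
  have hsumw : ∑ k, w k = 1 := by
    have h1 : (V * star V) i i = 1 := by rw [hVs]; simp [Matrix.one_apply]
    have h2 := hentry (fun _ => 1)
    simp only [Complex.ofReal_one, Matrix.diagonal_one, mul_one, one_mul] at h2
    rw [h2] at h1
    exact_mod_cast h1
  have hMre : (M i i).re = ∑ k, μ k * w k := by
    have hcomp : (RCLike.ofReal ∘ μ : Fin K → ℂ) = fun k => ((μ k : ℝ) : ℂ) := rfl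
    conv_lhs => rw [show M = V * diagonal (RCLike.ofReal ∘ μ) * star V from hM.spectral_theorem]
    rw [hcomp, hentry μ, Complex.ofReal_re]
  have hEre : ((NormedSpace.exp M) i i).re = ∑ k, Real.exp (μ k) * w k := by
    rw [exp_hermitian_eq hM, ← hV, ← hμ, hentry (fun k => Real.exp (μ k)), Complex.ofReal_re]
  have hjen := convexOn_exp.map_sum_le (t := Finset.univ) (w := w) (p := μ)
    (fun k _ => Complex.normSq_nonneg _) hsumw (fun k _ => Set.mem_univ _)
  simp only [smul_eq_mul] at hjen
  rw [hMre, hEre]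
  calc Real.exp (∑ k, μ k * w k) = Real.exp (∑ k, w k * μ k) := by
        congr 1; exact Finset.sum_congr rfl fun k _ => mul_comm _ _
    _ ≤ ∑ k, w k * Real.exp (μ k) := hjen
    _ = ∑ k, Real.exp (μ k) * w k := Finset.sum_congr rfl fun k _ => mul_comm _ _

lemma trace_exp_re_ge {M : Matrix (Fin K) (Fin K) ℂ} (hM : M.IsHermitian) :
    ∑ i, Real.exp ((M i i).re) ≤ (Matrix.trace (NormedSpace.exp M)).re := by
  have : (Matrix.trace (NormedSpace.exp M)).re = ∑ i, ((NormedSpace.exp M) i i).re := by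
    simp [Matrix.trace, Matrix.diag, Complex.re_sum]
  rw [this]
  exact Finset.sum_le_sum fun i _ => peierls hM i


end DQAEMAux

open DQAEMAux

set_option maxHeartbeats 1000000 in
/-- Monotonicity of DQAEM: with A(θ) = H(θ) + H^{nc}, Gibbs density
ρ(θ) = e^{−βA(θ)}/Tr e^{−βA(θ)}, negative free energy
𝒢(θ) = (1/β)·ln Tr[e^{−βA(θ)}] and 𝒰(θ;θ') = Tr[ρ(θ')·(−βA(θ))],
if the M-step does not decrease 𝒰, then 𝒢 does not decrease. -/
theorem dqaem_monotonicity
    {K : ℕ} (hK : 0 < K) {Θ : Type*}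
    (H : Θ → Matrix (Fin K) (Fin K) ℂ) (Hnc : Matrix (Fin K) (Fin K) ℂ)
    (hH : ∀ θ, (H θ).IsHermitian) (hHnc : Hnc.IsHermitian)
    (β : ℝ) (hβ : 0 < β)
    (A : Θ → Matrix (Fin K) (Fin K) ℂ) (hA : ∀ θ, A θ = H θ + Hnc)
    (ρ : Θ → Matrix (Fin K) (Fin K) ℂ)
    (hρ : ∀ θ, ρ θ = (Matrix.trace (NormedSpace.exp (-(β : ℂ) • A θ)))⁻¹ •
                       NormedSpace.exp (-(β : ℂ) • A θ))
    (𝒢 : Θ → ℝ)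
    (h𝒢 : ∀ θ, 𝒢 θ = (1 / β) *
        Real.log (Matrix.trace (NormedSpace.exp (-(β : ℂ) • A θ))).re)
    (𝒰 : Θ → Θ → ℝ)
    (h𝒰 : ∀ θ θ', 𝒰 θ θ' = (Matrix.trace (ρ θ' * (-(β : ℂ) • A θ))).re)
    (θt θt1 : Θ)
    (hstep : 𝒰 θt θt ≤ 𝒰 θt1 θt) :
    𝒢 θt ≤ 𝒢 θt1 := by
  classical
  haveI : Nonempty (Fin K) := ⟨⟨0, hK⟩⟩
  -- Hermitian-ness
  have hAh : ∀ θ, (-(β : ℂ) • A θ).IsHermitian := by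
    intro θ
    have h : (A θ).IsHermitian := by rw [hA]; exact (hH θ).add hHnc
    rw [Matrix.IsHermitian, Matrix.conjTranspose_smul, h.eq]
    congr 1
    simp
  set X : Matrix (Fin K) (Fin K) ℂ := -(β : ℂ) • A θt with hXdef
  set Y : Matrix (Fin K) (Fin K) ℂ := -(β : ℂ) • A θt1 with hYdef
  have hX : X.IsHermitian := hAh θt
  have hY : Y.IsHermitian := hAh θt1
  set U : Matrix (Fin K) (Fin K) ℂ := (hX.eigenvectorUnitary : Matrix (Fin K) (Fin K) ℂ) with hU
  set lam : Fin K → ℝ := hX.eigenvalues with hlam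
  set M : Matrix (Fin K) (Fin K) ℂ := star U * Y * U with hM
  have hMh : M.IsHermitian := Matrix.isHermitian_conjTranspose_mul_mul U hY
  set m : Fin K → ℝ := fun i => (M i i).re with hm
  set Z : ℝ := ∑ i, Real.exp (lam i) with hZ
  have hZpos : 0 < Z := Finset.sum_pos (fun i _ => Real.exp_pos _) Finset.univ_nonempty
  have hsU : star U * U = 1 := Matrix.mem_unitaryGroup_iff'.mp hX.eigenvectorUnitary.2
  have hUs : U * star U = 1 := Matrix.mem_unitaryGroup_iff.mp hX.eigenvectorUnitary.2
  -- trace of exp X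
  have htrX : Matrix.trace (NormedSpace.exp X) = (Z : ℂ) := trace_exp_hermitian hX
  -- 𝒰 values
  have hUcalc : ∀ W : Matrix (Fin K) (Fin K) ℂ,
      (Matrix.trace (ρ θt * W)).re = Z⁻¹ * ∑ i, Real.exp (lam i) * ((star U * W * U) i i).re := by
    intro W
    rw [hρ θt, ← hXdef, Matrix.smul_mul, Matrix.trace_smul, htrX, trace_exp_mul hX, ← hU, ← hlam]
    rw [smul_eq_mul, ← Complex.ofReal_inv, Complex.re_ofReal_mul]
    congr 1
    rw [Complex.re_sum]
    exact Finset.sum_congr rfl fun i _ => Complex.re_ofReal_mul _ _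
  have h𝒰tt : 𝒰 θt θt = Z⁻¹ * ∑ i, Real.exp (lam i) * lam i := by
    rw [h𝒰, hUcalc X]
    congr 1
    refine Finset.sum_congr rfl fun i _ => ?_
    congr 1
    rw [show star U * X * U = diagonal (RCLike.ofReal ∘ hX.eigenvalues) from
      by rw [← hX.conjStarAlgAut_star_eigenvectorUnitary, Unitary.conjStarAlgAut_star_apply]]
    simp [Matrix.diagonal_apply_eq, hlam]
  have h𝒰t1t : 𝒰 θt1 θt = Z⁻¹ * ∑ i, Real.exp (lam i) * m i := by
    rw [h𝒰, hUcalc Y]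
  -- the step inequality in eigen-coordinates
  have hstep' : ∑ i, Real.exp (lam i) * lam i ≤ ∑ i, Real.exp (lam i) * m i := by
    have := hstep
    rw [h𝒰tt, h𝒰t1t] at this
    exact (mul_le_mul_iff_right₀ (inv_pos.2 hZpos)).mp this
  -- Jensen with weights exp(lam i)/Z
  set w : Fin K → ℝ := fun i => Real.exp (lam i) / Z with hw
  have hsumw : ∑ i, w i = 1 := by
    rw [hw]; simp only []
    rw [← Finset.sum_div, ← hZ, div_self (ne_of_gt hZpos)]
  have hjen := convexOn_exp.map_sum_le (t := Finset.univ) (w := w)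
    (p := fun i => m i - lam i)
    (fun i _ => div_nonneg (Real.exp_pos _).le hZpos.le) hsumw (fun i _ => Set.mem_univ _)
  simp only [smul_eq_mul] at hjen
  have hexparg : 0 ≤ ∑ i, w i * (m i - lam i) := by
    have : ∑ i, w i * (m i - lam i)
        = Z⁻¹ * (∑ i, Real.exp (lam i) * m i - ∑ i, Real.exp (lam i) * lam i) := by
      rw [mul_sub, Finset.mul_sum, Finset.mul_sum, ← Finset.sum_sub_distrib]
      refine Finset.sum_congr rfl fun i _ => ?_
      simp only [hw, div_eq_inv_mul]; ring
    rw [this]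
    exact mul_nonneg (inv_pos.2 hZpos).le (sub_nonneg.2 hstep')
  have hone : (1 : ℝ) ≤ ∑ i, w i * Real.exp (m i - lam i) := by
    calc (1 : ℝ) = Real.exp 0 := Real.exp_zero.symm
      _ ≤ Real.exp (∑ i, w i * (m i - lam i)) := Real.exp_le_exp.2 hexparg
      _ ≤ ∑ i, w i * Real.exp (m i - lam i) := hjen
  have hZle : Z ≤ ∑ i, Real.exp (m i) := by
    have hsum : ∑ i, w i * Real.exp (m i - lam i) = Z⁻¹ * ∑ i, Real.exp (m i) := by
      rw [Finset.mul_sum]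
      refine Finset.sum_congr rfl fun i _ => ?_
      simp only [hw]
      rw [div_mul_eq_mul_div, ← Real.exp_add]
      rw [show lam i + (m i - lam i) = m i by ring, div_eq_inv_mul]
    rw [hsum] at hone
    calc Z = Z * 1 := (mul_one Z).symm
      _ ≤ Z * (Z⁻¹ * ∑ i, Real.exp (m i)) := by
          exact mul_le_mul_of_nonneg_left hone hZpos.le
      _ = ∑ i, Real.exp (m i) := by
          rw [← mul_assoc, mul_inv_cancel₀ (ne_of_gt hZpos), one_mul]
  -- Peierls: ∑ exp(m i) ≤ Re tr exp Y
  have hexpM : NormedSpace.exp M = star U * NormedSpace.exp Y * U := by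
    have hinv : U⁻¹ = star U := Matrix.inv_eq_left_inv hsU
    have hUnit : IsUnit U := by
      apply (Matrix.isUnit_iff_isUnit_det U).mpr
      have := congrArg Matrix.det hUs
      rw [Matrix.det_mul, Matrix.det_one] at this
      exact IsUnit.of_mul_eq_one _ this
    rw [hM, ← hinv, Matrix.exp_conj' U Y hUnit]
  have htrMY : Matrix.trace (NormedSpace.exp M) = Matrix.trace (NormedSpace.exp Y) := by
    rw [hexpM, Matrix.trace_mul_cycle, hUs, one_mul]
  have hpei : ∑ i, Real.exp (m i) ≤ (Matrix.trace (NormedSpace.exp Y)).re := by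
    rw [← htrMY]
    exact trace_exp_re_ge hMh
  -- conclude
  have hfinal : Z ≤ (Matrix.trace (NormedSpace.exp Y)).re := le_trans hZle hpei
  rw [h𝒢 θt, h𝒢 θt1, ← hXdef, ← hYdef]
  have hreX : (Matrix.trace (NormedSpace.exp X)).re = Z := by rw [htrX, Complex.ofReal_re]
  rw [hreX]
  exact mul_le_mul_of_nonneg_left (Real.log_le_log hZpos hfinal)
    (by positivity)
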